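/- Let G be a countable group and Q ⊆ G finite symmetric containing 1. The subshift Y_Q ⊆ 2^G of indicator functions of maximal Q-spaced sets is Q³-irreducible: for any finite F₀, F₁ ⊆ G with Q³F₀ ∩ Q³F₁ = ∅ and any patterns α_i ∈ S_{F_i}(Y_Q), there exists s ∈ Y_Q with s|_{F_i} = α_i for i = 0, 1. -/
import Mathlib


open Set Pointwise

/-- `S` is `Q`-spaced: right translates `Qg` for distinct `g ∈ S` are disjoint. -/
def Spaced {G : Type*} [Group G] (Q S : Set G) : Prop :=
  ∀ g ∈ S, ∀ h ∈ S, g ≠ h → Disjoint (Q * ({g} : Set G)) (Q * ({h} : Set G))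

/-- `S` is `Q`-syndetic: `⋃_{g ∈ S} Qg = G`. -/
def Syndetic {G : Type*} [Group G] (Q S : Set G) : Prop :=
  ∀ x : G, ∃ g ∈ S, x ∈ Q * ({g} : Set G)

/-- `S` is a maximal `Q`-spaced set. -/
def MaxSpaced {G : Type*} [Group G] (Q S : Set G) : Prop :=
  Spaced Q S ∧ ∀ T : Set G, Spaced Q T → S ⊆ T → T = S


/-- The right shift action of `G` on `2^G`: `(g · s)(h) = s(hg)`. -/
def rshift {G A : Type*} [Group G] (g : G) (s : G → A) : G → A := fun h => s (h * g)

/-- The subshift of indicator functions of maximal `Q`-spaced sets. -/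
def YQ {G : Type*} [Group G] (Q : Set G) : Set (G → Bool) :=
  {s | MaxSpaced Q {g | s g = true}}


/-- A subshift `Y ⊆ A^G` is `D`-irreducible: any two patterns occurring in `Y`
on finite sets `F₀, F₁` which are `D`-apart can be jointly realized in `Y`. -/
def IrreducibleSubshift {G A : Type*} [Group G] (D : Set G) (Y : Set (G → A)) : Prop :=
  ∀ F₀ F₁ : Set G, F₀.Finite → F₁.Finite → Disjoint (D * F₀) (D * F₁) →
    ∀ y₀ ∈ Y, ∀ y₁ ∈ Y, ∃ y ∈ Y, (∀ f ∈ F₀, y f = y₀ f) ∧ (∀ f ∈ F₁, y f = y₁ f)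

/-- Any spaced set extends to a maximal spaced set (Zorn). -/
lemma spaced_extend {G : Type*} [Group G] (Q A : Set G) (hA : Spaced Q A) :
    ∃ S : Set G, A ⊆ S ∧ MaxSpaced Q S := by
  obtain ⟨S, hAS, hSmem, hSmax⟩ :=
    zorn_subset_nonempty {T : Set G | Spaced Q T}
      (fun c hc hchain hne => by
        refine ⟨⋃₀ c, ?_, fun s hs => subset_sUnion_of_mem hs⟩
        intro g hg h hh hne'
        obtain ⟨t₁, ht₁, hgt⟩ := hg
        obtain ⟨t₂, ht₂, hht⟩ := hh
        rcases eq_or_ne t₁ t₂ with rfl | htne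
        · exact hc ht₁ g hgt h hht hne'
        · rcases hchain ht₁ ht₂ htne with hsub | hsub
          · exact hc ht₂ g (hsub hgt) h hht hne'
          · exact hc ht₁ g hgt h (hsub hht) hne') A hA
  exact ⟨S, hAS, hSmem, fun T hT hST => (hSmax hT hST).antisymm hST⟩

/-- If `S₀` is maximal spaced, `S` is spaced and contains `S₀ ∩ Q²F`,
then on `F` we have `S ⊆ S₀`. -/
lemma mem_of_maxspaced {G : Type*} [Group G] {Q S S₀ F : Set G}
    (hQsym : ∀ q ∈ Q, q⁻¹ ∈ Q)
    (hS : Spaced Q S) (hS₀ : MaxSpaced Q S₀)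
    (hsub : S₀ ∩ ((Q * Q) * F) ⊆ S) {g : G} (hgF : g ∈ F) (hgS : g ∈ S) : g ∈ S₀ := by
  by_contra hg
  have hni : ¬ Spaced Q (insert g S₀) := by
    intro h
    exact hg ((hS₀.2 _ h (subset_insert _ _)) ▸ mem_insert g S₀)
  -- extract a witness h ∈ S₀ with Qg ∩ Qh ≠ ∅
  have hw : ∃ h ∈ S₀, h ≠ g ∧ ¬ Disjoint (Q * ({g} : Set G)) (Q * ({h} : Set G)) := by
    by_contra hcon
    push_neg at hcon
    apply hni
    intro a ha b hb hab
    rcases ha with rfl | ha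
    · rcases hb with rfl | hb
      · exact absurd rfl hab
      · exact hcon b hb (fun hbg => hab hbg.symm)
    · rcases hb with rfl | hb
      · exact (hcon a ha (fun hag => hab hag)).symm
      · exact hS₀.1 a ha b hb hab
  obtain ⟨h, hh₀, hhg, hnd⟩ := hw
  obtain ⟨x, hx₁, hx₂⟩ := Set.not_disjoint_iff.mp hnd
  obtain ⟨q₁, hq₁, b₁, hb₁, hx₁'⟩ := hx₁
  obtain ⟨q₂, hq₂, b₂, hb₂, hx₂'⟩ := hx₂
  rw [Set.mem_singleton_iff] at hb₁ hb₂
  rw [hb₁] at hx₁'; rw [hb₂] at hx₂'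
  have hq : q₂ * h = q₁ * g := hx₂'.trans hx₁'.symm
  -- h = q₂⁻¹ * q₁ * g ∈ Q * Q * F
  have hhQF : h ∈ (Q * Q) * F := by
    have he : h = (q₂⁻¹ * q₁) * g := by
      rw [mul_assoc, ← hq, ← mul_assoc, inv_mul_cancel, one_mul]
    rw [he]
    exact mul_mem_mul (mul_mem_mul (hQsym _ hq₂) hq₁) hgF
  have hhS : h ∈ S := hsub ⟨hh₀, hhQF⟩
  have hd := hS g hgS h hhS (fun e => hhg e.symm)
  refine Set.not_disjoint_iff.mpr ⟨x, ?_, ?_⟩ hd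
  · have := mul_mem_mul hq₁ (Set.mem_singleton g)
    simpa [← hx₁'] using this
  · have := mul_mem_mul hq₂ (Set.mem_singleton h)
    simpa [← hx₂'] using this

theorem stmt12 {G : Type*} [Group G] [Countable G] (Q : Set G)
    (hQfin : Q.Finite) (hQsym : ∀ q ∈ Q, q⁻¹ ∈ Q) (hQone : (1 : G) ∈ Q) :
    IrreducibleSubshift (Q * Q * Q) (YQ Q) := by
  classical
  intro F₀ F₁ hF₀ hF₁ hdisj y₀ hy₀ y₁ hy₁
  set S₀ := {g | y₀ g = true} with hS₀def
  set S₁ := {g | y₁ g = true} with hS₁def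
  have hy₀' : MaxSpaced Q S₀ := hy₀
  have hy₁' : MaxSpaced Q S₁ := hy₁
  set A : Set G := (S₀ ∩ ((Q * Q) * F₀)) ∪ (S₁ ∩ ((Q * Q) * F₁)) with hAdef
  have hQ3 : ∀ F : Set G, Q * ((Q * Q) * F) = (Q * Q * Q) * F := by
    intro F; rw [← mul_assoc, ← mul_assoc]
  have hcross : ∀ g ∈ (Q * Q) * F₀, ∀ h ∈ (Q * Q) * F₁,
      Disjoint (Q * ({g} : Set G)) (Q * ({h} : Set G)) := by
    intro g hg h hh
    have h₀ : Q * ({g} : Set G) ⊆ (Q * Q * Q) * F₀ := by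
      rw [← hQ3]
      exact Set.mul_subset_mul_left (Set.singleton_subset_iff.mpr hg)
    have h₁ : Q * ({h} : Set G) ⊆ (Q * Q * Q) * F₁ := by
      rw [← hQ3]
      exact Set.mul_subset_mul_left (Set.singleton_subset_iff.mpr hh)
    exact hdisj.mono h₀ h₁
  have hA : Spaced Q A := by
    rintro g (⟨hg₀, hg₂⟩ | ⟨hg₁, hg₂⟩) h (⟨hh₀, hh₂⟩ | ⟨hh₁, hh₂⟩) hne
    · exact hy₀'.1 g hg₀ h hh₀ hne
    · exact hcross g hg₂ h hh₂
    · exact (hcross h hh₂ g hg₂).symm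
    · exact hy₁'.1 g hg₁ h hh₁ hne
  obtain ⟨S, hAS, hSmax⟩ := spaced_extend Q A hA
  have hsub₀ : S₀ ∩ ((Q * Q) * F₀) ⊆ S := fun x hx => hAS (Or.inl hx)
  have hsub₁ : S₁ ∩ ((Q * Q) * F₁) ⊆ S := fun x hx => hAS (Or.inr hx)
  have hFQQ : ∀ (F : Set G) (f : G), f ∈ F → f ∈ (Q * Q) * F := by
    intro F f hf
    have h1 : (1 : G) ∈ Q * Q := by
      have := mul_mem_mul hQone hQone
      simpa using this
    have := mul_mem_mul h1 hf
    simpa using this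
  refine ⟨fun g => if g ∈ S then true else false, ?_, ?_, ?_⟩
  · show MaxSpaced Q {g | (if g ∈ S then true else false) = true}
    have : {g | (if g ∈ S then true else false) = true} = S := by
      ext g; by_cases hg : g ∈ S <;> simp [hg]
    rw [this]; exact hSmax
  · intro f hf
    by_cases hfS : f ∈ S
    · have hm : f ∈ S₀ := mem_of_maxspaced hQsym hSmax.1 hy₀' hsub₀ hf hfS
      have ht : y₀ f = true := hm
      simp [hfS, ht]
    · have hm : f ∉ S₀ := fun h => hfS (hsub₀ ⟨h, hFQQ F₀ f hf⟩)
      have ht : y₀ f = false := by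
        rw [← Bool.not_eq_true]; exact hm
      simp [hfS, ht]
  · intro f hf
    by_cases hfS : f ∈ S
    · have hm : f ∈ S₁ := mem_of_maxspaced hQsym hSmax.1 hy₁' hsub₁ hf hfS
      have ht : y₁ f = true := hm
      simp [hfS, ht]
    · have hm : f ∉ S₁ := fun h => hfS (hsub₁ ⟨h, hFQQ F₁ f hf⟩)
      have ht : y₁ f = false := by
        rw [← Bool.not_eq_true]; exact hm
      simp [hfS, ht]
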